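/- Let B be the block matrix [I_n, −2ηA; 2ηAᵀ, I_m] with η‖A‖ < 1/2. If u = (u₁, u₂) is an eigenvector of B with eigenvalue μ′ (so 2ηA u₂ = (1−μ′)u₁ and 2ηAᵀu₁ = (μ′−1)u₂), and u is simultaneously an eigenvector of T = B² + 4C with eigenvalue μ, then 1 − μ = −(1 − μ′)². -/

import Mathlib

open Matrix
open scoped Matrix.Norms.L2Operator

theorem stmt_10 (n m : ℕ) (A : Matrix (Fin n) (Fin m) ℝ) (η : ℝ)
    (hηA : η * ‖A‖ < 1 / 2)
    (B : Matrix (Fin n ⊕ Fin m) (Fin n ⊕ Fin m) ℝ)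
    (hB : B = Matrix.fromBlocks 1 ((-2 * η) • A) ((2 * η) • Aᵀ) 1)
    (C : Matrix (Fin n ⊕ Fin m) (Fin n ⊕ Fin m) ℝ)
    (hC : C = Matrix.fromBlocks 0 (η • A) ((-η) • Aᵀ) 0)
    (u : Fin n ⊕ Fin m → ℂ) (hu : u ≠ 0) (μ' μ : ℂ)
    (huB : (B.map (Complex.ofReal)).mulVec u = μ' • u)
    (huT : ((B ^ 2 + (4 : ℝ) • C).map (Complex.ofReal)).mulVec u = μ • u) :
    1 - μ = -(1 - μ') ^ 2 := by
  have hC2 : (2 : ℝ) • C = 1 - B := by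
    subst hB hC
    ext i j
    rcases i with i | i <;> rcases j with j | j <;>
      simp [Matrix.one_apply] <;> (try split) <;> ring
  have hT : B ^ 2 + (4 : ℝ) • C = 1 + (1 - B) ^ 2 := by
    have h4 : (4 : ℝ) • C = (2 : ℝ) • ((2 : ℝ) • C) := by
      rw [smul_smul]; norm_num
    rw [h4, hC2, Algebra.smul_def, map_ofNat]; noncomm_ring
  rw [hT] at huT
  set Bc := B.map (Complex.ofReal) with hBc
  have hmm : ∀ M : Matrix (Fin n ⊕ Fin m) (Fin n ⊕ Fin m) ℝ,
      M.map Complex.ofReal = Complex.ofRealHom.mapMatrix M := fun M => rfl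
  have hmap : ((1 + (1 - B) ^ 2).map Complex.ofReal) = 1 + (1 - Bc) ^ 2 := by
    rw [hmm, map_add, map_pow, map_sub, _root_.map_one, hBc, hmm B]
  rw [hmap] at huT
  have h1 : (1 - Bc).mulVec u = (1 - μ') • u := by
    rw [Matrix.sub_mulVec, Matrix.one_mulVec, huB, sub_smul, one_smul]
  have h2 : ((1 : Matrix _ _ ℂ) + (1 - Bc) ^ 2).mulVec u = u + (1 - μ') ^ 2 • u := by
    rw [Matrix.add_mulVec, Matrix.one_mulVec, sq, ← Matrix.mulVec_mulVec, h1,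
      Matrix.mulVec_smul, h1, smul_smul, sq]
  rw [h2] at huT
  have key : (μ - (1 + (1 - μ') ^ 2)) • u = 0 := by
    rw [sub_smul, add_smul, one_smul, ← huT]; abel
  rcases smul_eq_zero.mp key with h | h
  · have : μ = 1 + (1 - μ') ^ 2 := by linear_combination h
    rw [this]; ring
  · exact absurd h hu
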